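/- Every surjective affine map g : Δ^m → [q_min, q_max]^m from the polytope Δ^m (product of m probability simplices in ℝ^{m×d}) onto the box [q_min, q_max]^m given by g(u)_j = ⟨u_j, q⟩, where q ∈ ℝ^d has minimum entry q_min and maximum entry q_max with q_min < q_max, is an open map (with respect to the subspace topologies). -/
import Mathlib

open Finset

private lemma aux_bounds {d : ℕ} (q : Fin d → ℝ) (lmin lmax : Fin d)
    (hmin : ∀ lam, q lmin ≤ q lam) (hmax : ∀ lam, q lam ≤ q lmax)
    {v : Fin d → ℝ} (hv : v ∈ stdSimplex ℝ (Fin d)) :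
    q lmin ≤ ∑ lam, v lam * q lam ∧ ∑ lam, v lam * q lam ≤ q lmax := by
  obtain ⟨h0, h1⟩ := hv
  constructor
  · calc q lmin = ∑ lam, v lam * q lmin := by rw [← Finset.sum_mul, h1, one_mul]
    _ ≤ ∑ lam, v lam * q lam :=
        Finset.sum_le_sum fun l _ => mul_le_mul_of_nonneg_left (hmin l) (h0 l)
  · calc ∑ lam, v lam * q lam ≤ ∑ lam, v lam * q lmax :=
        Finset.sum_le_sum fun l _ => mul_le_mul_of_nonneg_left (hmax l) (h0 l)
    _ = q lmax := by rw [← Finset.sum_mul, h1, one_mul]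

private lemma aux_move {d : ℕ} (q : Fin d → ℝ) {v : Fin d → ℝ}
    (hv : v ∈ stdSimplex ℝ (Fin d)) (l : Fin d) {t : ℝ} (ht0 : 0 ≤ t) (ht1 : t ≤ 1) :
    (fun lam => (1 - t) * v lam + t * (if lam = l then 1 else 0)) ∈ stdSimplex ℝ (Fin d) ∧
    (∑ lam, ((1 - t) * v lam + t * (if lam = l then 1 else 0)) * q lam
      = (1 - t) * (∑ lam, v lam * q lam) + t * q l) ∧
    ∀ lam, |((1 - t) * v lam + t * (if lam = l then 1 else 0)) - v lam| ≤ t := by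
  obtain ⟨h0, h1⟩ := hv
  have hvle : ∀ lam, v lam ≤ 1 := fun lam =>
    h1 ▸ Finset.single_le_sum (fun i _ => h0 i) (Finset.mem_univ lam)
  refine ⟨⟨fun lam => ?_, ?_⟩, ?_, fun lam => ?_⟩
  · have : (0:ℝ) ≤ (if lam = l then (1:ℝ) else 0) := by split <;> norm_num
    have h1t : (0:ℝ) ≤ 1 - t := by linarith
    exact add_nonneg (mul_nonneg h1t (h0 lam)) (mul_nonneg ht0 this)
  · simp [Finset.sum_add_distrib, ← Finset.mul_sum, h1, mul_ite, Finset.sum_ite_eq']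
  · have e1 : ∑ lam, ((1 - t) * v lam) * q lam = (1 - t) * ∑ lam, v lam * q lam := by
      rw [Finset.mul_sum]; exact Finset.sum_congr rfl fun _ _ => by ring
    have e2 : ∑ lam, (t * (if lam = l then (1:ℝ) else 0)) * q lam = t * q l := by
      have : ∀ lam, (t * (if lam = l then (1:ℝ) else 0)) * q lam
          = if lam = l then t * q l else 0 := by
        intro lam; split <;> simp_all
      simp [this, Finset.sum_ite_eq']
    calc ∑ lam, ((1 - t) * v lam + t * (if lam = l then 1 else 0)) * q lam
        = ∑ lam, (((1 - t) * v lam) * q lam + (t * (if lam = l then (1:ℝ) else 0)) * q lam) :=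
          Finset.sum_congr rfl fun _ _ => by ring
      _ = (1 - t) * (∑ lam, v lam * q lam) + t * q l := by
          rw [Finset.sum_add_distrib, e1, e2]
  · have : (1 - t) * v lam + t * (if lam = l then (1:ℝ) else 0) - v lam
        = t * ((if lam = l then (1:ℝ) else 0) - v lam) := by ring
    rw [this, abs_mul, abs_of_nonneg ht0]
    have habs : |(if lam = l then (1:ℝ) else 0) - v lam| ≤ 1 := by
      rw [abs_le]
      constructor <;> split <;> cases lt_or_ge t 1 <;> linarith [h0 lam, hvle lam]
    nlinarith

private lemma aux_surj {d : ℕ} (q : Fin d → ℝ) (lmin lmax : Fin d)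
    (hlt : q lmin < q lmax) (w : ℝ) (hw1 : q lmin ≤ w) (hw2 : w ≤ q lmax) :
    ∃ v ∈ stdSimplex ℝ (Fin d), ∑ lam, v lam * q lam = w := by
  have hv0 : (fun lam => if lam = lmin then (1:ℝ) else 0) ∈ stdSimplex ℝ (Fin d) := by
    refine ⟨fun lam => ?_, ?_⟩
    · dsimp only; split <;> norm_num
    · simp [Finset.sum_ite_eq']
  have hval0 : ∑ lam, (if lam = lmin then (1:ℝ) else 0) * q lam = q lmin := by
    have : ∀ lam, (if lam = lmin then (1:ℝ) else 0) * q lam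
        = if lam = lmin then q lam else 0 := by intro lam; split <;> simp
    simp [this, Finset.sum_ite_eq']
  have hpos : 0 < q lmax - q lmin := by linarith
  set t := (w - q lmin) / (q lmax - q lmin) with ht
  have ht0 : 0 ≤ t := div_nonneg (by linarith) hpos.le
  have ht1 : t ≤ 1 := by rw [div_le_one hpos]; linarith
  obtain ⟨hmem, hval, _⟩ := aux_move q hv0 lmax ht0 ht1
  refine ⟨_, hmem, ?_⟩
  rw [hval, hval0]
  have : t * (q lmax - q lmin) = w - q lmin := div_mul_cancel₀ _ hpos.ne'
  linear_combination this

private lemma aux_key {d : ℕ} (q : Fin d → ℝ) (lmin lmax : Fin d)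
    (hmin : ∀ lam, q lmin ≤ q lam) (hmax : ∀ lam, q lam ≤ q lmax)
    {v : Fin d → ℝ} (hv : v ∈ stdSimplex ℝ (Fin d)) {ε : ℝ} (hε : 0 < ε) :
    ∃ δ > 0, ∀ w, q lmin ≤ w → w ≤ q lmax → |w - ∑ lam, v lam * q lam| < δ →
      ∃ v' ∈ stdSimplex ℝ (Fin d), (∑ lam, v' lam * q lam) = w ∧
        ∀ lam, |v' lam - v lam| < ε := by
  set a := ∑ lam, v lam * q lam with ha
  obtain ⟨ha1, ha2⟩ := aux_bounds q lmin lmax hmin hmax hv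
  have hX : (0:ℝ) < if a < q lmax then q lmax - a else 1 := by split <;> [linarith; norm_num]
  have hY : (0:ℝ) < if q lmin < a then a - q lmin else 1 := by split <;> [linarith; norm_num]
  refine ⟨(ε/2) * min (if a < q lmax then q lmax - a else 1)
      (if q lmin < a then a - q lmin else 1),
    mul_pos (by linarith) (lt_min hX hY), fun w hw1 hw2 hw => ?_⟩
  rcases le_or_gt a w with hcase | hcase
  · by_cases hq : a < q lmax
    · have hqa : 0 < q lmax - a := by linarith
      set t := (w - a) / (q lmax - a) with htdef
      have ht0 : 0 ≤ t := div_nonneg (by linarith) hqa.le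
      have ht1 : t ≤ 1 := by rw [div_le_one hqa]; linarith
      obtain ⟨hmem, hval, hbd⟩ := aux_move q hv lmax ht0 ht1
      have hδ : w - a < (ε/2) * (q lmax - a) := by
        have h1 : w - a ≤ |w - a| := le_abs_self _
        have h2 : min (if a < q lmax then q lmax - a else 1)
            (if q lmin < a then a - q lmin else 1) ≤ q lmax - a := by
          rw [if_pos hq] at *; exact min_le_left _ _
        nlinarith [hw, h1]
      have htlt : t < ε := by
        rw [htdef, div_lt_iff₀ hqa]
        nlinarith
      refine ⟨_, hmem, ?_, fun lam => lt_of_le_of_lt (hbd lam) htlt⟩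
      rw [hval]
      have : t * (q lmax - a) = w - a := div_mul_cancel₀ _ hqa.ne'
      linear_combination this
    · have haq : a = q lmax := le_antisymm ha2 (not_lt.mp hq)
      have hwa : w = a := le_antisymm (haq ▸ hw2) hcase
      exact ⟨v, hv, by rw [hwa], fun lam => by simpa using hε⟩
  · have hq : q lmin < a := lt_of_le_of_lt hw1 hcase
    have hqa : 0 < a - q lmin := by linarith
    set t := (a - w) / (a - q lmin) with htdef
    have ht0 : 0 ≤ t := div_nonneg (by linarith) hqa.le
    have ht1 : t ≤ 1 := by rw [div_le_one hqa]; linarith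
    obtain ⟨hmem, hval, hbd⟩ := aux_move q hv lmin ht0 ht1
    have hδ : a - w < (ε/2) * (a - q lmin) := by
      have h1 : a - w ≤ |w - a| := by rw [abs_sub_comm]; exact le_abs_self _
      have h2 : min (if a < q lmax then q lmax - a else 1)
          (if q lmin < a then a - q lmin else 1) ≤ a - q lmin := by
        rw [if_pos hq] at *; exact min_le_right _ _
      nlinarith [hw, h1]
    have htlt : t < ε := by
      rw [htdef, div_lt_iff₀ hqa]
      nlinarith
    refine ⟨_, hmem, ?_, fun lam => lt_of_le_of_lt (hbd lam) htlt⟩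
    rw [hval]
    have : t * (a - q lmin) = a - w := div_mul_cancel₀ _ hqa.ne'
    linear_combination -this

private lemma aux_min {m : ℕ} (f : Fin m → ℝ) (hf : ∀ j, 0 < f j) :
    ∃ δ > 0, ∀ j, δ ≤ f j := by
  rcases Nat.eq_zero_or_pos m with h | h
  · subst h; exact ⟨1, one_pos, fun j => j.elim0⟩
  · have : Nonempty (Fin m) := Fin.pos_iff_nonempty.mp h
    have hne : (Finset.univ : Finset (Fin m)).Nonempty := Finset.univ_nonempty
    refine ⟨Finset.univ.inf' hne f, ?_, fun j => Finset.inf'_le f (Finset.mem_univ j)⟩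
    exact (Finset.lt_inf'_iff hne).mpr fun i _ => hf i

/-- The surjective affine map `u ↦ (⟨u_j, q⟩)_j` from the product of probability simplices
onto the box `[q_min, q_max]^m` is an open map (for the subspace topologies). -/
theorem stmt_2 (m d : ℕ) (q : Fin d → ℝ) (lmin lmax : Fin d)
    (hmin : ∀ lam, q lmin ≤ q lam) (hmax : ∀ lam, q lam ≤ q lmax)
    (hlt : q lmin < q lmax)
    (Δm : Set (Fin m → Fin d → ℝ))
    (hΔm : Δm = {u | ∀ j, u j ∈ stdSimplex ℝ (Fin d)})
    (Box : Set (Fin m → ℝ))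
    (hBox : Box = {w | ∀ j, w j ∈ Set.Icc (q lmin) (q lmax)})
    (g : (Fin m → Fin d → ℝ) → (Fin m → ℝ))
    (hg : ∀ u j, g u j = ∑ lam, u j lam * q lam) :
    g '' Δm = Box ∧
      ∀ U : Set (Fin m → Fin d → ℝ), IsOpen U →
        ∃ V : Set (Fin m → ℝ), IsOpen V ∧ g '' (U ∩ Δm) = V ∩ Box := by
  classical
  subst hΔm hBox
  have hImage : g '' {u | ∀ j, u j ∈ stdSimplex ℝ (Fin d)}
      = {w | ∀ j, w j ∈ Set.Icc (q lmin) (q lmax)} := by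
    ext w
    constructor
    · rintro ⟨u, hu, rfl⟩ j
      rw [Set.mem_Icc, hg]
      exact aux_bounds q lmin lmax hmin hmax (hu j)
    · intro hw
      have : ∀ j, ∃ v ∈ stdSimplex ℝ (Fin d), ∑ lam, v lam * q lam = w j := fun j =>
        aux_surj q lmin lmax hlt (w j) (hw j).1 (hw j).2
      choose u hu hval using this
      exact ⟨u, hu, funext fun j => (hg u j).trans (hval j)⟩
  refine ⟨hImage, fun U hU => ?_⟩
  have main : ∀ u ∈ U ∩ {u | ∀ j, u j ∈ stdSimplex ℝ (Fin d)},
      ∃ δ > 0, ∀ w ∈ {w : Fin m → ℝ | ∀ j, w j ∈ Set.Icc (q lmin) (q lmax)},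
        dist w (g u) < δ →
        ∃ u' ∈ U ∩ {u | ∀ j, u j ∈ stdSimplex ℝ (Fin d)}, g u' = w := by
    intro u hu
    obtain ⟨ε, hε, hball⟩ := Metric.isOpen_iff.mp hU u hu.1
    have hkey : ∀ j, ∃ δ > 0, ∀ w, q lmin ≤ w → w ≤ q lmax →
        |w - ∑ lam, u j lam * q lam| < δ →
        ∃ v' ∈ stdSimplex ℝ (Fin d), (∑ lam, v' lam * q lam) = w ∧
          ∀ lam, |v' lam - u j lam| < ε := fun j =>
      aux_key q lmin lmax hmin hmax (hu.2 j) hε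
    choose δf hδfpos hδf using hkey
    obtain ⟨δ, hδpos, hδle⟩ := aux_min δf hδfpos
    refine ⟨δ, hδpos, fun w hw hdist => ?_⟩
    have hj : ∀ j, ∃ v' ∈ stdSimplex ℝ (Fin d), (∑ lam, v' lam * q lam) = w j ∧
        ∀ lam, |v' lam - u j lam| < ε := by
      intro j
      apply hδf j (w j) (hw j).1 (hw j).2
      have h1 : dist (w j) (g u j) ≤ dist w (g u) := dist_le_pi_dist w (g u) j
      rw [Real.dist_eq, hg] at h1
      exact lt_of_le_of_lt h1 (lt_of_lt_of_le hdist (hδle j))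
    choose u' hu'mem hu'val hu'close using hj
    have hgu' : g u' = w := funext fun j => (hg u' j).trans (hu'val j)
    have hu'U : u' ∈ U := by
      apply hball
      rw [Metric.mem_ball, dist_pi_lt_iff hε]
      intro j
      rw [dist_pi_lt_iff hε]
      intro lam
      rw [Real.dist_eq]
      exact hu'close j lam
    exact ⟨u', ⟨hu'U, hu'mem⟩, hgu'⟩
  choose! δ hδpos hδ using main
  refine ⟨⋃ u ∈ U ∩ {u | ∀ j, u j ∈ stdSimplex ℝ (Fin d)}, Metric.ball (g u) (δ u),
    isOpen_biUnion fun u _ => Metric.isOpen_ball, ?_⟩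
  ext w
  simp only [Set.mem_image, Set.mem_inter_iff, Set.mem_iUnion, Metric.mem_ball]
  constructor
  · rintro ⟨u, hu, rfl⟩
    refine ⟨⟨u, hu, Metric.mem_ball_self (hδpos u hu)⟩, ?_⟩
    exact hImage ▸ Set.mem_image_of_mem g hu.2
  · rintro ⟨⟨u, hu, hwball⟩, hwBox⟩
    obtain ⟨u', hu', rfl⟩ := hδ u hu w hwBox hwball
    exact ⟨u', hu', rfl⟩
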